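/- arXiv:2403.01549 — 2 statements merged into one kernel-verified Lean document; each statement's English description precedes it below -/
import Mathlib

section
/- For a real n×d matrix Z, the matrix ZZ^T is symmetric positive semidefinite, and for any λ > 0 the function Z ↦ log det(I + λ ZZ^T) equals ∑_i log(1 + λ σ_i^2) where σ_i are the singular values of Z; consequently it is maximized, subject to the Frobenius-norm constraint ‖Z‖_F^2 = c, when all nonzero singular values are equal. -/
open Finset Matrix

lemma tangent_le_aux {x b : ℝ} (hx : 0 < x) (hb : 0 < b) :
    Real.log x ≤ Real.log b + (x - b) / b := by
  have h := Real.log_le_sub_one_of_pos (x := x / b) (by positivity)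
  have hlog : Real.log (x / b) = Real.log x - Real.log b := Real.log_div hx.ne' hb.ne'
  rw [hlog] at h
  have : x / b - 1 = (x - b) / b := by field_simp
  linarith [this ▸ h]

lemma tangent_lt_aux {x b : ℝ} (hx : 0 < x) (hb : 0 < b) (hne : x ≠ b) :
    Real.log x < Real.log b + (x - b) / b := by
  have h := Real.log_lt_sub_one_of_pos (x := x / b) (by positivity)
    (by intro h; exact hne (by field_simp at h; linarith))
  have hlog : Real.log (x / b) = Real.log x - Real.log b := Real.log_div hx.ne' hb.ne'
  rw [hlog] at h
  have : x / b - 1 = (x - b) / b := by field_simp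
  linarith [this ▸ h]

lemma key_jensen_aux {n : ℕ} (r : ℕ) (hr : 0 < r) (μ : Fin n → ℝ) (lam c : ℝ)
    (hlam : 0 < lam) (hc : 0 < c) (hnn : ∀ i, 0 ≤ μ i) (hsum : ∑ i, μ i = c)
    (hcard : (Finset.univ.filter fun i => μ i ≠ 0).card ≤ r) :
    (∑ i, Real.log (1 + lam * μ i) ≤ (r : ℝ) * Real.log (1 + lam * c / (r : ℝ))) ∧
    ((∑ i, Real.log (1 + lam * μ i) = (r : ℝ) * Real.log (1 + lam * c / (r : ℝ))) ↔
      ∀ i, μ i = c / (r : ℝ) ∨ μ i = 0) := by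
  have hr' : (0:ℝ) < (r:ℝ) := by exact_mod_cast hr
  set a : ℝ := lam * c / (r:ℝ) with ha_def
  have ha : 0 < a := by positivity
  set L : ℝ := Real.log (1 + a) with hL_def
  set s : Finset (Fin n) := Finset.univ.filter fun i => μ i ≠ 0 with hs_def
  set k : ℕ := s.card with hk_def
  have haL : a / (1 + a) < L := by
    have h := tangent_lt_aux (x := 1) (b := 1 + a) one_pos (by linarith) (by intro h; linarith)
    rw [Real.log_one] at h
    have : (1 - (1 + a)) / (1 + a) = -(a / (1 + a)) := by field_simp; ring
    rw [this] at h
    linarith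
  have hpos : ∀ i, (0:ℝ) < 1 + lam * μ i := fun i => by nlinarith [hnn i, hlam.le]
  have hb : (0:ℝ) < 1 + a := by linarith
  have htan : ∀ i, Real.log (1 + lam * μ i) ≤ L + (lam * μ i - a) / (1 + a) := by
    intro i
    have := tangent_le_aux (hpos i) hb
    simpa using this
  have htan' : ∀ i, μ i ≠ c / (r:ℝ) →
      Real.log (1 + lam * μ i) < L + (lam * μ i - a) / (1 + a) := by
    intro i hi
    have hne : (1 + lam * μ i) ≠ (1 + a) := by
      intro h
      apply hi
      have : lam * μ i = lam * (c / (r:ℝ)) := by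
        rw [ha_def] at h; field_simp at h ⊢; exact mul_left_cancel₀ hlam.ne' (by linarith)
      exact mul_left_cancel₀ hlam.ne' this
    have := tangent_lt_aux (hpos i) hb hne
    simpa using this
  have hsum_s : ∑ i ∈ s, μ i = c := by
    rw [hs_def, Finset.sum_filter_ne_zero] at *
    · exact hsum
  have hlog_s : ∑ i, Real.log (1 + lam * μ i) = ∑ i ∈ s, Real.log (1 + lam * μ i) := by
    rw [hs_def]
    rw [Finset.sum_filter_of_ne]
    intro i _ h
    intro h0
    rw [h0] at h
    simp at h
  have hT : ∑ i ∈ s, (L + (lam * μ i - a) / (1 + a))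
      = (k:ℝ) * L + (lam * c - (k:ℝ) * a) / (1 + a) := by
    rw [Finset.sum_add_distrib, Finset.sum_const, ← Finset.sum_div, hk_def]
    congr 1
    · simp [mul_comm]
    · congr 1
      rw [Finset.sum_sub_distrib, ← Finset.mul_sum, hsum_s, Finset.sum_const]
      simp [mul_comm]
  have hkr : (k:ℝ) ≤ (r:ℝ) := by exact_mod_cast hcard
  have hra : lam * c = (r:ℝ) * a := by rw [ha_def]; field_simp
  have hT_le : (k:ℝ) * L + (lam * c - (k:ℝ) * a) / (1 + a) ≤ (r:ℝ) * L := by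
    rw [hra]
    have h1 : ((r:ℝ) * a - (k:ℝ) * a) / (1 + a) = ((r:ℝ) - (k:ℝ)) * (a / (1 + a)) := by
      field_simp
    rw [h1]
    nlinarith [haL, hkr]
  have hle : ∑ i, Real.log (1 + lam * μ i) ≤ (r:ℝ) * L := by
    rw [hlog_s]
    calc ∑ i ∈ s, Real.log (1 + lam * μ i)
        ≤ ∑ i ∈ s, (L + (lam * μ i - a) / (1 + a)) := Finset.sum_le_sum fun i _ => htan i
      _ = (k:ℝ) * L + (lam * c - (k:ℝ) * a) / (1 + a) := hT
      _ ≤ (r:ℝ) * L := hT_le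
  refine ⟨hle, ?_, ?_⟩
  · intro heq
    by_contra hcon
    push_neg at hcon
    obtain ⟨i0, hi1, hi2⟩ := hcon
    have hi0s : i0 ∈ s := by simp [hs_def, hi2]
    have hstrict : ∑ i ∈ s, Real.log (1 + lam * μ i)
        < ∑ i ∈ s, (L + (lam * μ i - a) / (1 + a)) :=
      Finset.sum_lt_sum (fun i _ => htan i) ⟨i0, hi0s, htan' i0 hi1⟩
    rw [hlog_s] at heq
    rw [hT] at hstrict
    linarith
  · intro hall
    have hcr : (0:ℝ) < c / (r:ℝ) := by positivity
    have hs_eq : ∀ i ∈ s, μ i = c / (r:ℝ) := by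
      intro i hi
      rcases hall i with h | h
      · exact h
      · exfalso; rw [hs_def] at hi; simp [h] at hi
    have hkc : (k:ℝ) * (c / (r:ℝ)) = c := by
      conv_rhs => rw [← hsum_s]
      rw [Finset.sum_congr rfl hs_eq, Finset.sum_const, nsmul_eq_mul, ← hk_def]
    have hkr' : (k:ℝ) = (r:ℝ) := by
      have h2 : (k:ℝ) * c = (r:ℝ) * c := by field_simp at hkc; rw [hkc]
      exact mul_right_cancel₀ hc.ne' h2
    have hlamcr : 1 + lam * (c / (r:ℝ)) = 1 + a := by rw [ha_def]; ring_nf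
    rw [hlog_s, Finset.sum_congr rfl (fun i hi => by rw [hs_eq i hi, hlamcr]),
      Finset.sum_const, nsmul_eq_mul, ← hk_def, hkr']

lemma trace_eq_sum_eigenvalues_aux {n : ℕ} (A : Matrix (Fin n) (Fin n) ℝ)
    (hA : A.IsHermitian) : A.trace = ∑ i, hA.eigenvalues i := by
  conv_lhs => rw [hA.spectral_theorem]
  rw [Unitary.conjStarAlgAut_apply, Matrix.trace_mul_comm, ← Matrix.mul_assoc, Unitary.coe_star_mul_self, Matrix.one_mul,
    Matrix.trace_diagonal]
  simp

lemma det_one_add_smul_aux {n : ℕ} (A : Matrix (Fin n) (Fin n) ℝ)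
    (hA : A.IsHermitian) (lam : ℝ) :
    (1 + lam • A).det = ∏ i, (1 + lam * hA.eigenvalues i) := by
  set U : Matrix (Fin n) (Fin n) ℝ := ↑hA.eigenvectorUnitary
  have hUU : U * star U = 1 := (Matrix.mem_unitaryGroup_iff).mp hA.eigenvectorUnitary.2
  have hdiag : (RCLike.ofReal ∘ hA.eigenvalues : Fin n → ℝ) = hA.eigenvalues := by
    ext i; simp
  have key : (1 : Matrix (Fin n) (Fin n) ℝ) + lam • A
      = U * (1 + lam • diagonal hA.eigenvalues) * star U := by
    rw [Matrix.mul_add, Matrix.add_mul, Matrix.mul_one, hUU]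
    congr 1
    rw [Matrix.mul_smul, Matrix.smul_mul]
    conv_lhs => rw [hA.spectral_theorem, Unitary.conjStarAlgAut_apply, hdiag]
  rw [key, Matrix.det_mul, Matrix.det_mul, mul_comm (U.det), mul_assoc,
    ← Matrix.det_mul, hUU, Matrix.det_one, mul_one]
  have : (1 : Matrix (Fin n) (Fin n) ℝ) + lam • diagonal hA.eigenvalues
      = diagonal (fun i => 1 + lam * hA.eigenvalues i) := by
    rw [← Matrix.diagonal_one, ← Matrix.diagonal_smul, ← Matrix.diagonal_add]
    rfl
  rw [this, Matrix.det_diagonal]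

/-- `Z Zᵀ` is symmetric PSD; `log det (I + λ Z Zᵀ) = ∑ᵢ log (1 + λ σᵢ²)` where
`σᵢ²` are the eigenvalues of `Z Zᵀ` (squares of the singular values of `Z`); and subject to
the Frobenius constraint `tr(Z Zᵀ) = c > 0`, it is maximized when all nonzero singular
values are equal (to `√(c/r)` with `r = min n d`). -/
theorem logdet_one_add_smul_gram {n d : ℕ} (hn : 0 < n) (hd : 0 < d)
    (Z : Matrix (Fin n) (Fin d) ℝ) (lam c : ℝ) (hlam : 0 < lam) (hc : 0 < c)
    (hherm : (Z * Zᵀ).IsHermitian)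
    (htr : (Z * Zᵀ).trace = c) :
    (Z * Zᵀ).PosSemidef ∧
    Real.log (1 + lam • (Z * Zᵀ)).det = ∑ i, Real.log (1 + lam * hherm.eigenvalues i) ∧
    (Real.log (1 + lam • (Z * Zᵀ)).det ≤
        (min n d : ℝ) * Real.log (1 + lam * c / (min n d : ℝ)) ∧
      (Real.log (1 + lam • (Z * Zᵀ)).det =
          (min n d : ℝ) * Real.log (1 + lam * c / (min n d : ℝ)) ↔
        ∀ i, hherm.eigenvalues i = c / (min n d : ℝ) ∨ hherm.eigenvalues i = 0)) := by
  have hpsd : (Z * Zᵀ).PosSemidef := by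
    simpa using Matrix.posSemidef_self_mul_conjTranspose Z
  have hnn : ∀ i, 0 ≤ hherm.eigenvalues i := fun i => hpsd.eigenvalues_nonneg i
  have hsum : ∑ i, hherm.eigenvalues i = c := by
    rw [← trace_eq_sum_eigenvalues_aux _ hherm, htr]
  have hpos : ∀ i, (0:ℝ) < 1 + lam * hherm.eigenvalues i := fun i => by
    nlinarith [hnn i, hlam.le]
  have hlogdet : Real.log (1 + lam • (Z * Zᵀ)).det
      = ∑ i, Real.log (1 + lam * hherm.eigenvalues i) := by
    rw [det_one_add_smul_aux _ hherm lam]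
    exact Real.log_prod fun i _ => (hpos i).ne'
  have hcard : (Finset.univ.filter fun i => hherm.eigenvalues i ≠ 0).card ≤ min n d := by
    have h1 : (Finset.univ.filter fun i => hherm.eigenvalues i ≠ 0).card
        = Fintype.card {i // hherm.eigenvalues i ≠ 0} := (Fintype.card_subtype _).symm
    rw [h1, ← hherm.rank_eq_card_non_zero_eigs]
    refine le_min ?_ ?_
    · simpa using Matrix.rank_le_card_height (Z * Zᵀ)
    · calc (Z * Zᵀ).rank ≤ Z.rank := Matrix.rank_mul_le_left Z Zᵀ
        _ ≤ d := by simpa using Matrix.rank_le_card_width Z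
  have hrpos : 0 < min n d := lt_min hn hd
  obtain ⟨h1, h2⟩ := key_jensen_aux (min n d) hrpos hherm.eigenvalues lam c hlam hc hnn hsum hcard
  exact ⟨hpsd, hlogdet, by rw [hlogdet, ← Nat.cast_min]; exact h1, by rw [hlogdet, ← Nat.cast_min]; exact h2⟩
end

section
/- If two unit-norm vectors z1, z2 ∈ ℝ^d satisfy ‖z1 − z2‖² = 0 (the invariance term of Eq. 14 is minimized) and z1 = f1(c, c̄1), z2 = f2(c, c̄2) where each zi is a function of a shared semantic variable c and view-specific noise c̄i with c̄1, c̄2 independent given c, then z1 = z2 is a function of c alone almost surely. -/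
open Finset Real

variable {Ω : Type*} [Fintype Ω]

/-- Distribution of a random variable `X` under weights `p`. -/
noncomputable def distOf {S : Type*} [Fintype S] [DecidableEq S]
    (p : Ω → ℝ) (X : Ω → S) (s : S) : ℝ :=
  ∑ ω, if X ω = s then p ω else 0

/-- Shannon entropy of a random variable. -/
noncomputable def entropy {S : Type*} [Fintype S] [DecidableEq S]
    (p : Ω → ℝ) (X : Ω → S) : ℝ :=
  ∑ s, Real.negMulLog (distOf p X s)

/-- Mutual information `I(X;Y) = H(X) + H(Y) - H(X,Y)`. -/
noncomputable def mutualInfo {S T : Type*} [Fintype S] [Fintype T] [DecidableEq S] [DecidableEq T]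
    (p : Ω → ℝ) (X : Ω → S) (Y : Ω → T) : ℝ :=
  entropy p X + entropy p Y - entropy p (fun ω => (X ω, Y ω))

/-- Conditional entropy `H(T|X) = H(T,X) - H(X)`. -/
noncomputable def condEntropy {S T : Type*} [Fintype S] [Fintype T] [DecidableEq S] [DecidableEq T]
    (p : Ω → ℝ) (T' : Ω → T) (X : Ω → S) : ℝ :=
  entropy p (fun ω => (T' ω, X ω)) - entropy p X

/-- Conditional mutual information `I(X;T|Z) = H(X|Z) + H(T|Z) - H(X,T|Z)`. -/
noncomputable def condMutualInfo {S T U : Type*} [Fintype S] [Fintype T] [Fintype U]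
    [DecidableEq S] [DecidableEq T] [DecidableEq U]
    (p : Ω → ℝ) (X : Ω → S) (T' : Ω → T) (Z : Ω → U) : ℝ :=
  condEntropy p X Z + condEntropy p T' Z - condEntropy p (fun ω => (X ω, T' ω)) Z

/-- Interaction information `I(X1;X2;T) = I(X1;T) - I(X1;T|X2)`. -/
noncomputable def interactionInfo {S T U : Type*} [Fintype S] [Fintype T] [Fintype U]
    [DecidableEq S] [DecidableEq T] [DecidableEq U]
    (p : Ω → ℝ) (X1 : Ω → S) (X2 : Ω → U) (T' : Ω → T) : ℝ :=
  mutualInfo p X1 T' - condMutualInfo p X1 T' X2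

/-- Markov chain `X → Y → Z`: conditional independence of `X` and `Z` given `Y`. -/
def IsMarkov {A B C : Type*} [Fintype A] [Fintype B] [Fintype C]
    [DecidableEq A] [DecidableEq B] [DecidableEq C]
    (p : Ω → ℝ) (X : Ω → A) (Y : Ω → B) (Z : Ω → C) : Prop :=
  ∀ a b c,
    distOf p (fun ω => (X ω, Y ω, Z ω)) (a, b, c) * distOf p Y b =
      distOf p (fun ω => (X ω, Y ω)) (a, b) * distOf p (fun ω => (Y ω, Z ω)) (b, c)

lemma distOf_nonneg' {Ω S : Type*} [Fintype Ω] [Fintype S] [DecidableEq S]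
    (p : Ω → ℝ) (hp : ∀ ω, 0 ≤ p ω) (X : Ω → S) (s : S) : 0 ≤ distOf p X s := by
  unfold distOf
  refine Finset.sum_nonneg fun ω _ => ?_
  split
  · exact hp ω
  · exact le_refl 0

lemma distOf_pos' {Ω S : Type*} [Fintype Ω] [Fintype S] [DecidableEq S]
    (p : Ω → ℝ) (hp : ∀ ω, 0 ≤ p ω) (X : Ω → S) (ω : Ω) (hω : 0 < p ω) :
    0 < distOf p X (X ω) := by
  unfold distOf
  have hle : p ω ≤ ∑ ω', if X ω' = X ω then p ω' else 0 := by
    have := Finset.single_le_sum (f := fun ω' => if X ω' = X ω then p ω' else 0)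
      (fun ω' _ => by split
                      · exact hp ω'
                      · exact le_refl 0) (Finset.mem_univ ω)
    simpa using this
  linarith

lemma exists_of_distOf_pos' {Ω S : Type*} [Fintype Ω] [Fintype S] [DecidableEq S]
    (p : Ω → ℝ) (hp : ∀ ω, 0 ≤ p ω) (X : Ω → S) (s : S) (hpos : 0 < distOf p X s) :
    ∃ ω, 0 < p ω ∧ X ω = s := by
  by_contra h
  push_neg at h
  have : distOf p X s = 0 := by
    unfold distOf
    apply Finset.sum_eq_zero
    intro ω _
    by_cases hx : X ω = s
    · simp only [hx, if_true]
      by_contra hne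
      exact absurd hx (h ω (lt_of_le_of_ne (hp ω) (Ne.symm hne)))
    · simp [hx]
  linarith

/-- if two unit-norm representations `z1 = f1(c, c̄1)`, `z2 = f2(c, c̄2)` of
conditionally independent view-specific latents coincide (the invariance loss vanishes),
then they are (on the support of `p`) a function of the shared semantic `c` alone. -/
theorem invariance_forces_shared_content {d : ℕ} {C B1 B2 : Type*}
    [Fintype C] [Fintype B1] [Fintype B2] [DecidableEq C] [DecidableEq B1] [DecidableEq B2]
    (p : Ω → ℝ) (hp : ∀ ω, 0 ≤ p ω) (hsum : ∑ ω, p ω = 1)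
    (c : Ω → C) (cbar1 : Ω → B1) (cbar2 : Ω → B2)
    (f1 : C → B1 → EuclideanSpace ℝ (Fin d)) (f2 : C → B2 → EuclideanSpace ℝ (Fin d))
    (z1 z2 : Ω → EuclideanSpace ℝ (Fin d))
    (hz1 : ∀ ω, z1 ω = f1 (c ω) (cbar1 ω)) (hz2 : ∀ ω, z2 ω = f2 (c ω) (cbar2 ω))
    (hu1 : ∀ ω, ‖z1 ω‖ = 1) (hu2 : ∀ ω, ‖z2 ω‖ = 1)
    -- conditional independence of the view-specific latents given `c`
    (hci : ∀ (b1 : B1) (b2 : B2) (c0 : C),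
      distOf p (fun ω => (cbar1 ω, cbar2 ω, c ω)) (b1, b2, c0) * distOf p c c0 =
        distOf p (fun ω => (cbar1 ω, c ω)) (b1, c0) *
          distOf p (fun ω => (cbar2 ω, c ω)) (b2, c0))
    -- the invariance term `E ‖z1 - z2‖²` vanishes
    (hinv : ∑ ω, p ω * ‖z1 ω - z2 ω‖ ^ 2 = 0) :
    ∃ g : C → EuclideanSpace ℝ (Fin d),
      ∀ ω, 0 < p ω → z1 ω = g (c ω) ∧ z2 ω = g (c ω) := by
  classical
  have hz12 : ∀ ω, 0 < p ω → z1 ω = z2 ω := by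
    intro ω hω
    have hterm : ∀ ω' ∈ Finset.univ (α := Ω), 0 ≤ p ω' * ‖z1 ω' - z2 ω'‖ ^ 2 :=
      fun ω' _ => mul_nonneg (hp ω') (by positivity)
    have h0 := (Finset.sum_eq_zero_iff_of_nonneg hterm).mp hinv ω (Finset.mem_univ ω)
    have hnorm : ‖z1 ω - z2 ω‖ ^ 2 = 0 := by
      rcases mul_eq_zero.mp h0 with h | h
      · exact absurd h (ne_of_gt hω)
      · exact h
    have : ‖z1 ω - z2 ω‖ = 0 := pow_eq_zero_iff (n := 2) (by norm_num) |>.mp hnorm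
    exact sub_eq_zero.mp (norm_eq_zero.mp this)
  have hkey : ∀ ω ω', 0 < p ω → 0 < p ω' → c ω = c ω' → z1 ω = z1 ω' := by
    intro ω ω' hω hω' hc
    have h1 : 0 < distOf p (fun ω => (cbar1 ω, c ω)) (cbar1 ω, c ω) :=
      distOf_pos' p hp (fun ω => (cbar1 ω, c ω)) ω hω
    have h2 : 0 < distOf p (fun ω => (cbar2 ω, c ω)) (cbar2 ω', c ω) := by
      have := distOf_pos' p hp (fun ω => (cbar2 ω, c ω)) ω' hω'
      rw [hc]; exact this
    have heq := hci (cbar1 ω) (cbar2 ω') (c ω)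
    have hrhs : 0 < distOf p (fun ω'' => (cbar1 ω'', cbar2 ω'', c ω'')) (cbar1 ω, cbar2 ω', c ω) *
        distOf p c (c ω) := heq ▸ mul_pos h1 h2
    have hjoint : 0 < distOf p (fun ω'' => (cbar1 ω'', cbar2 ω'', c ω'')) (cbar1 ω, cbar2 ω', c ω) := by
      by_contra hle
      push_neg at hle
      have hnn := distOf_nonneg' p hp (fun ω'' => (cbar1 ω'', cbar2 ω'', c ω'')) (cbar1 ω, cbar2 ω', c ω)
      have hz : distOf p (fun ω'' => (cbar1 ω'', cbar2 ω'', c ω'')) (cbar1 ω, cbar2 ω', c ω) = 0 :=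
        le_antisymm hle hnn
      rw [hz, zero_mul] at hrhs
      exact lt_irrefl _ hrhs
    obtain ⟨ω'', hω'', hX⟩ := exists_of_distOf_pos' p hp _ _ hjoint
    have hb1 : cbar1 ω'' = cbar1 ω := congrArg Prod.fst hX
    have hb2 : cbar2 ω'' = cbar2 ω' := congrArg Prod.fst (congrArg Prod.snd hX)
    have hcω'' : c ω'' = c ω := congrArg Prod.snd (congrArg Prod.snd hX)
    calc z1 ω = f1 (c ω) (cbar1 ω) := hz1 ω
      _ = z1 ω'' := by rw [hz1, hb1, hcω'']
      _ = z2 ω'' := hz12 ω'' hω''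
      _ = f2 (c ω') (cbar2 ω') := by rw [hz2, hb2, hcω'', hc]
      _ = z2 ω' := (hz2 ω').symm
      _ = z1 ω' := (hz12 ω' hω').symm
  refine ⟨fun c0 => if h : ∃ ω, 0 < p ω ∧ c ω = c0 then z1 h.choose else 0, ?_⟩
  intro ω hω
  have hex : ∃ ω', 0 < p ω' ∧ c ω' = c ω := ⟨ω, hω, rfl⟩
  have hz : z1 ω = z1 hex.choose :=
    hkey ω hex.choose hω hex.choose_spec.1 hex.choose_spec.2.symm
  refine ⟨?_, ?_⟩
  · simp only [dif_pos hex]; exact hz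
  · simp only [dif_pos hex]; rw [← hz12 ω hω]; exact hz
end
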